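/- Let $U_1, \dots, U_n$ be i.i.d. uniform random variables on $[0,1]$ with $n \geq 2$ and $0 \leq \delta \leq \frac{1}{n-1}$. Then $\mathbb{P}[\min_{1 \leq i < j \leq n} |U_i - U_j| \geq \delta] = (1-(n-1)\delta)^n$. -/

import Mathlib

open MeasureTheory Matrix

lemma vol_eq_coords (n : ℕ) (i j : Fin n) (hij : i ≠ j) :
    (volume : Measure (Fin n → ℝ)) {v | v i = v j} = 0 := by
  classical
  set t : Matrix.TransvectionStruct (Fin n) ℝ := ⟨i, j, hij, -1⟩ with ht'
  have hT := Real.volume_preserving_transvectionStruct (ι := Fin n) t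
  have hset : {v : Fin n → ℝ | v i = v j} = (toLin' t.toMatrix) ⁻¹' {x | x i = 0} := by
    ext v
    simp only [Set.mem_setOf_eq, Set.mem_preimage, ht', TransvectionStruct.toMatrix_mk,
      transvection, toLin'_apply, add_mulVec, one_mulVec, smul_mulVec,
      single_mulVec, Pi.add_apply, Pi.smul_apply]
    rw [Function.update_self]
    constructor <;> intro h <;> linarith
  rw [hset, hT.measure_preimage]
  · rw [volume_pi]; exact Measure.pi_hyperplane _ i 0
  · have : ({x : Fin n → ℝ | x i = 0}) = (fun x : Fin n → ℝ => x i) ⁻¹' {0} := rfl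
    rw [this]
    exact ((measurable_pi_apply i) (MeasurableSet.singleton (0:ℝ))).nullMeasurableSet

lemma vol_noninj (n : ℕ) :
    (volume : Measure (Fin n → ℝ)) {v | ¬ Function.Injective v} = 0 := by
  have hsub : {v : Fin n → ℝ | ¬ Function.Injective v} ⊆
      ⋃ (p : Fin n × Fin n), {v | p.1 ≠ p.2 ∧ v p.1 = v p.2} := by
    intro v hv
    simp only [Function.Injective, not_forall, Set.mem_setOf_eq] at hv
    obtain ⟨a, b, hab, hne⟩ := hv
    exact Set.mem_iUnion.2 ⟨(a, b), hne, hab⟩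
  refine measure_mono_null hsub (measure_iUnion_null fun p => ?_)
  by_cases h : p.1 = p.2
  · exact measure_mono_null (fun v hv => absurd h hv.1) (measure_empty)
  · exact measure_mono_null (fun v hv => hv.2) (vol_eq_coords n p.1 p.2 h)

lemma perm_eq_of_strictMono {n : ℕ} {u : Fin n → ℝ} {σ τ : Equiv.Perm (Fin n)}
    (hσ : StrictMono (u ∘ σ)) (hτ : StrictMono (u ∘ τ)) : σ = τ := by
  have hrange : Set.range (u ∘ σ) = Set.range (u ∘ τ) := by
    rw [Set.range_comp, Set.range_comp, Equiv.range_eq_univ, Equiv.range_eq_univ]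
  have h : u ∘ ⇑σ = u ∘ ⇑τ := (hσ.range_inj hτ).1 hrange
  have hu : Function.Injective u := by
    have : Function.Injective ((u ∘ σ) ∘ σ.symm) := hσ.injective.comp σ.symm.injective
    simpa [Function.comp_def] using this
  ext k
  exact congrArg _ (hu (congrFun h k))

lemma chain_gaps {n : ℕ} {δ : ℝ} {f : Fin n → ℝ}
    (hf : ∀ k l : Fin n, (k : ℕ) + 1 = (l : ℕ) → f k + δ ≤ f l) :
    ∀ (d : ℕ) (k l : Fin n), (l : ℕ) = (k : ℕ) + d → f k + δ * d ≤ f l := by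
  intro d
  induction d with
  | zero =>
    intro k l h
    have : k = l := Fin.ext (by omega)
    subst this; simp
  | succ d ih =>
    intro k l h
    have hl' : (k : ℕ) + d < n := by omega
    have h1 := ih k ⟨(k : ℕ) + d, hl'⟩ rfl
    have h2 := hf ⟨(k : ℕ) + d, hl'⟩ l (by simpa using by omega)
    push_cast
    push_cast at h1 h2
    linarith

theorem min_spacing_uniform (n : ℕ) (hn : 2 ≤ n) (δ : ℝ) (hδ0 : 0 ≤ δ)
    (hδ1 : δ ≤ 1 / (n - 1 : ℝ)) :
    (Measure.pi fun _ : Fin n => volume.restrict (Set.Icc (0 : ℝ) 1))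
      {u : Fin n → ℝ | ∀ i j : Fin n, i ≠ j → δ ≤ |u i - u j|} =
      ENNReal.ofReal ((1 - (n - 1 : ℝ) * δ) ^ n) := by
  classical
  have hn0 : 0 < n := by omega
  have hn2 : (2 : ℝ) ≤ (n : ℝ) := by exact_mod_cast hn
  have hn1 : (1 : ℝ) ≤ (n : ℝ) - 1 := by linarith
  have hnδ : ((n : ℝ) - 1) * δ ≤ 1 := by
    rw [le_div_iff₀ (by linarith : (0:ℝ) < (n:ℝ) - 1)] at hδ1
    linarith
  set s : ℝ := 1 - ((n : ℝ) - 1) * δ with hs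
  have hs0 : 0 ≤ s := by simp [hs]; linarith
  set cube : Set (Fin n → ℝ) := Set.pi Set.univ fun _ => Set.Icc (0 : ℝ) 1 with hcube_def
  set A : Set (Fin n → ℝ) := {u | ∀ i j : Fin n, i ≠ j → δ ≤ |u i - u j|} with hA_def
  have hmsA : MeasurableSet A := by
    have : A = ⋂ (i) (j) (_ : i ≠ j), {u : Fin n → ℝ | δ ≤ |u i - u j|} := by
      ext u; simp [hA_def]
    rw [this]
    exact MeasurableSet.iInter fun i => MeasurableSet.iInter fun j =>
      MeasurableSet.iInter fun _ => measurableSet_le measurable_const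
        (((measurable_pi_apply i).sub (measurable_pi_apply j)).abs)
  have hpi : (Measure.pi fun _ : Fin n => volume.restrict (Set.Icc (0 : ℝ) 1)) =
      (volume : Measure (Fin n → ℝ)).restrict cube := by
    refine Measure.pi_eq fun t ht => ?_
    rw [Measure.restrict_apply (MeasurableSet.univ_pi ht)]
    have : (Set.pi Set.univ t) ∩ cube = Set.pi Set.univ fun i => t i ∩ Set.Icc 0 1 := by
      rw [hcube_def, ← Set.pi_inter_distrib]
    rw [this, volume_pi_pi]
    exact Finset.prod_congr rfl fun i _ => (Measure.restrict_apply (ht i)).symm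
  rw [hpi, Measure.restrict_apply hmsA]
  rcases hδ0.lt_or_eq with hδpos | hδz
  · -- δ > 0
    set cubeS : Set (Fin n → ℝ) := Set.pi Set.univ fun _ => Set.Icc (0 : ℝ) s with hcubeS_def
    set E : Equiv.Perm (Fin n) → Set (Fin n → ℝ) :=
      fun σ => {u | u ∈ cube ∧ u ∈ A ∧ StrictMono (u ∘ σ)} with hE_def
    set F : Equiv.Perm (Fin n) → Set (Fin n → ℝ) :=
      fun σ => {v | v ∈ cubeS ∧ Monotone (v ∘ σ)} with hF_def
    set c : Equiv.Perm (Fin n) → (Fin n → ℝ) := fun σ i => δ * ((σ.symm i : ℕ) : ℝ) with hc_def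
    have hmsCube : MeasurableSet cube := MeasurableSet.univ_pi fun _ => measurableSet_Icc
    have hmsCubeS : MeasurableSet cubeS := MeasurableSet.univ_pi fun _ => measurableSet_Icc
    have hmsE : ∀ σ, MeasurableSet (E σ) := by
      intro σ
      have hsm : MeasurableSet {u : Fin n → ℝ | StrictMono (u ∘ σ)} := by
        have : {u : Fin n → ℝ | StrictMono (u ∘ σ)} =
            ⋂ (k) (l) (_ : k < l), {u : Fin n → ℝ | u (σ k) < u (σ l)} := by
          ext u
          constructor
          · intro h
            simp only [Set.mem_iInter]
            intro k l hkl
            exact h hkl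
          · intro h k l hkl
            simp only [Set.mem_iInter] at h
            exact h k l hkl
        rw [this]
        exact MeasurableSet.iInter fun k => MeasurableSet.iInter fun l =>
          MeasurableSet.iInter fun _ =>
            measurableSet_lt (measurable_pi_apply _) (measurable_pi_apply _)
      exact hmsCube.inter (hmsA.inter hsm)
    have hmsF : ∀ σ, MeasurableSet (F σ) := by
      intro σ
      have hmono : MeasurableSet {v : Fin n → ℝ | Monotone (v ∘ σ)} := by
        have : {v : Fin n → ℝ | Monotone (v ∘ σ)} =
            ⋂ (k) (l) (_ : k ≤ l), {v : Fin n → ℝ | v (σ k) ≤ v (σ l)} := by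
          ext v
          constructor
          · intro h
            simp only [Set.mem_iInter]
            intro k l hkl
            exact h hkl
          · intro h k l hkl
            simp only [Set.mem_iInter] at h
            exact h k l hkl
        rw [this]
        exact MeasurableSet.iInter fun k => MeasurableSet.iInter fun l =>
          MeasurableSet.iInter fun _ =>
            measurableSet_le (measurable_pi_apply _) (measurable_pi_apply _)
      exact hmsCubeS.inter hmono
    -- the translation bijection
    have hEF : ∀ σ : Equiv.Perm (Fin n), E σ = (fun u => u + -(c σ)) ⁻¹' (F σ) := by
      intro σ
      ext u
      simp only [hE_def, hF_def, Set.mem_setOf_eq, Set.mem_preimage, Pi.add_apply, Pi.neg_apply,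
        hc_def]
      constructor
      · rintro ⟨hcu, hAu, hmono⟩
        have hf : ∀ k l : Fin n, (k : ℕ) + 1 = (l : ℕ) → (u ∘ σ) k + δ ≤ (u ∘ σ) l := by
          intro k l hkl
          have hklt : k < l := by rw [Fin.lt_def]; omega
          have hne : σ k ≠ σ l := fun h => absurd (σ.injective h) (ne_of_lt hklt)
          have habs := hAu (σ k) (σ l) hne
          have hlt : u (σ k) < u (σ l) := hmono hklt
          rw [abs_sub_comm, abs_of_nonneg (by linarith)] at habs
          simpa using by linarith
        have hchain := chain_gaps hf
        have hub : ∀ k : Fin n, u (σ k) + δ * ((n : ℝ) - 1 - (k : ℕ)) ≤ 1 := by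
          intro k
          have hk1 : (k : ℕ) ≤ n - 1 := by omega
          have h1 := hchain (n - 1 - (k : ℕ)) k ⟨n - 1, by omega⟩ (by simp; omega)
          have hcast : (((n - 1 - (k : ℕ) : ℕ)) : ℝ) = (n : ℝ) - 1 - (k : ℕ) := by
            rw [Nat.cast_sub (by omega), Nat.cast_sub (by omega)]
            push_cast; ring
          rw [hcast] at h1
          simp only [Function.comp_apply] at h1
          have h2 : u (σ ⟨n - 1, by omega⟩) ≤ 1 := (hcu (σ ⟨n - 1, by omega⟩) trivial).2
          linarith
        have hlb : ∀ k : Fin n, δ * ((k : ℕ) : ℝ) ≤ u (σ k) := by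
          intro k
          have h1 := hchain (k : ℕ) ⟨0, hn0⟩ k (by simp)
          simp only [Function.comp_apply] at h1
          have h2 : 0 ≤ u (σ ⟨0, hn0⟩) := (hcu (σ ⟨0, hn0⟩) trivial).1
          linarith
        constructor
        · intro i _
          simp only [Pi.add_apply, Pi.neg_apply, hc_def]
          have hik : i = σ (σ.symm i) := (σ.apply_symm_apply i).symm
          constructor
          · have := hlb (σ.symm i)
            rw [← hik] at this
            linarith
          · have := hub (σ.symm i)
            rw [← hik] at this
            simp only [hs]
            nlinarith [this]
        · intro k l hkl
          simp only [Function.comp_apply, Pi.add_apply, Pi.neg_apply, hc_def,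
            Equiv.symm_apply_apply]
          rcases eq_or_lt_of_le hkl with heq | hlt
          · subst heq; exact le_rfl
          · have hkl' : (k : ℕ) ≤ (l : ℕ) := by exact_mod_cast Fin.le_def.1 hkl
            have h1 := hchain ((l : ℕ) - (k : ℕ)) k l (by omega)
            have hcast : (((l : ℕ) - (k : ℕ) : ℕ) : ℝ) = ((l : ℕ) : ℝ) - ((k : ℕ) : ℝ) := by
              rw [Nat.cast_sub hkl']
            rw [hcast] at h1
            simp only [Function.comp_apply] at h1
            nlinarith [h1]
      · rintro ⟨hcs, hmono⟩
        have hval : ∀ i, u i + -(δ * ((σ.symm i : ℕ) : ℝ)) ∈ Set.Icc 0 s := fun i => hcs i trivial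
        have hbound : ∀ i : Fin n, ((σ.symm i : ℕ) : ℝ) ≤ (n : ℝ) - 1 := by
          intro i
          have : ((σ.symm i : ℕ) : ℝ) + 1 ≤ (n : ℝ) := by exact_mod_cast (σ.symm i).isLt
          linarith
        have hgap : ∀ k l : Fin n, k < l → u (σ k) + δ ≤ u (σ l) := by
          intro k l hkl
          have hm : u (σ k) + -(δ * ((k : ℕ) : ℝ)) ≤ u (σ l) + -(δ * ((l : ℕ) : ℝ)) := by
            have := hmono (le_of_lt hkl)
            simpa [Equiv.symm_apply_apply] using this
          have hkl' : ((k : ℕ) : ℝ) + 1 ≤ ((l : ℕ) : ℝ) := by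
            have : (k : ℕ) + 1 ≤ (l : ℕ) := Fin.lt_def.1 hkl
            exact_mod_cast this
          nlinarith
        refine ⟨?_, ?_, ?_⟩
        · intro i _
          have h := hval i
          have hb := hbound i
          constructor
          · have := h.1; nlinarith [mul_nonneg hδ0 (Nat.cast_nonneg (σ.symm i : ℕ))]
          · have := h.2
            simp only [hs] at this
            nlinarith [mul_le_mul_of_nonneg_left hb hδ0]
        · intro i j hij
          have hij' : σ.symm i ≠ σ.symm j := fun h => hij (by simpa using congrArg σ h)
          rcases lt_or_gt_of_ne hij' with hlt | hlt
          · have := hgap (σ.symm i) (σ.symm j) hlt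
            rw [σ.apply_symm_apply, σ.apply_symm_apply] at this
            rw [abs_sub_comm, abs_of_nonneg (by linarith)]
            linarith
          · have := hgap (σ.symm j) (σ.symm i) hlt
            rw [σ.apply_symm_apply, σ.apply_symm_apply] at this
            rw [abs_of_nonneg (by linarith)]
            linarith
        · intro k l hkl
          have := hgap k l hkl
          simp only [Function.comp_apply]
          linarith [hδpos]
    -- cover and disjointness
    have hcover : A ∩ cube = ⋃ σ, E σ := by
      ext u
      constructor
      · rintro ⟨hAu, hcu⟩
        have huinj : Function.Injective u := by
          intro a b hab
          by_contra hne
          have := hAu a b hne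
          rw [hab] at this
          simp at this
          linarith
        have hmono : Monotone (u ∘ Tuple.sort u) := Tuple.monotone_sort u
        exact Set.mem_iUnion.2 ⟨Tuple.sort u, hcu, hAu,
          hmono.strictMono_of_injective (huinj.comp (Tuple.sort u).injective)⟩
      · intro hu
        obtain ⟨σ, h1, h2, _⟩ := Set.mem_iUnion.1 hu
        exact ⟨h2, h1⟩
    have hdisj : Pairwise (Function.onFun Disjoint E) := by
      intro σ τ hne
      rw [Function.onFun, Set.disjoint_left]
      rintro u ⟨_, _, hσ⟩ ⟨_, _, hτ⟩
      exact hne (perm_eq_of_strictMono hσ hτ)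
    have hFcover : cubeS = ⋃ σ, F σ := by
      ext v
      constructor
      · intro hv
        exact Set.mem_iUnion.2 ⟨Tuple.sort v, hv, Tuple.monotone_sort v⟩
      · intro hv
        obtain ⟨σ, h1, _⟩ := Set.mem_iUnion.1 hv
        exact h1
    have hFae : Pairwise (Function.onFun (AEDisjoint volume) F) := by
      intro σ τ hne
      refine measure_mono_null ?_ (vol_noninj n)
      rintro v ⟨⟨_, hσ⟩, ⟨_, hτ⟩⟩
      intro hvinj
      exact hne (perm_eq_of_strictMono
        (hσ.strictMono_of_injective (hvinj.comp σ.injective))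
        (hτ.strictMono_of_injective (hvinj.comp τ.injective)))
    -- compute
    rw [hcover, measure_iUnion hdisj hmsE]
    have hEvol : ∀ σ, volume (E σ) = volume (F σ) := by
      intro σ
      rw [hEF σ, measure_preimage_add_right]
    calc ∑' σ, volume (E σ) = ∑' σ, volume (F σ) := tsum_congr hEvol
      _ = volume (⋃ σ, F σ) :=
          (measure_iUnion₀ hFae fun σ => (hmsF σ).nullMeasurableSet).symm
      _ = volume cubeS := by rw [← hFcover]
      _ = ENNReal.ofReal (s ^ n) := by
          rw [hcubeS_def, volume_pi_pi]
          simp only [Real.volume_Icc, sub_zero]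
          rw [Finset.prod_const, Finset.card_univ, Fintype.card_fin, ← ENNReal.ofReal_pow hs0]
  · -- δ = 0
    have hA : A = Set.univ := by
      ext u
      simp only [hA_def, Set.mem_setOf_eq, Set.mem_univ, iff_true]
      intro i j _
      rw [← hδz]
      exact abs_nonneg _
    rw [hA, Set.univ_inter, hcube_def, volume_pi_pi]
    simp [Real.volume_Icc, ← hδz]
    rw [hs, ← hδz]
    norm_num
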